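/- Let n ≥ 1, let ω and W be symmetric real n×n matrices with ω·W = 1, let k₀ ∈ ℝ, let U ⊆ (Fin n → ℝ) be open and connected, and let x₀ ∈ U. Suppose α, β : (Fin n → ℝ) → ℝ are C² on U and both satisfy the flat GHSS system on U: for all x ∈ U and all i, j, ∂_i∂_j α(x) = (1/2)·(k₀·(1 − exp(2·α(x))) − Σ_{k,h} W_{kh}·∂_kα(x)·∂_hα(x))·ω_{ij} + ∂_iα(x)·∂_jα(x), and likewise for β. If α(x₀) = β(x₀) and ∂_iα(x₀) = ∂_iβ(x₀) for all i, then α = β on U. (Solutions of the GHSS system are uniquely determined by their first-order jet c₀, c₁,…,c_n at a single point.) -/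

import Mathlib

noncomputable def ghssRHS {n : ℕ} (ω W : Matrix (Fin n) (Fin n) ℝ) (k₀ : ℝ)
    (u : ℝ × (Fin n → ℝ)) (i j : Fin n) : ℝ :=
  (1/2) * (k₀ * (1 - Real.exp (2 * u.1)) - ∑ k, ∑ h, W k h * u.2 k * u.2 h) * ω i j
    + u.2 i * u.2 j

noncomputable def ghssF {n : ℕ} (ω W : Matrix (Fin n) (Fin n) ℝ) (k₀ : ℝ)
    (v : Fin n → ℝ) (u : ℝ × (Fin n → ℝ)) : ℝ × (Fin n → ℝ) :=
  (∑ j, v j * u.2 j, fun j => ∑ i, v i * ghssRHS ω W k₀ u i j)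

lemma ghssRHS_contDiff {n : ℕ} (ω W : Matrix (Fin n) (Fin n) ℝ) (k₀ : ℝ) (i j : Fin n) :
    ContDiff ℝ 1 (fun u => ghssRHS ω W k₀ u i j) := by
  unfold ghssRHS
  have h1 : ContDiff ℝ 1 (fun u : ℝ × (Fin n → ℝ) => u.1) := contDiff_fst
  have h2 : ∀ k : Fin n, ContDiff ℝ 1 (fun u : ℝ × (Fin n → ℝ) => u.2 k) :=
    fun k => (contDiff_apply ℝ ℝ k).comp contDiff_snd
  have hsum : ContDiff ℝ 1 (fun u : ℝ × (Fin n → ℝ) =>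
      ∑ k, ∑ h, W k h * u.2 k * u.2 h) := by
    apply ContDiff.sum; intro k _; apply ContDiff.sum; intro h _
    exact (contDiff_const.mul (h2 k)).mul (h2 h)
  have hexp : ContDiff ℝ 1 (fun u : ℝ × (Fin n → ℝ) => Real.exp (2 * u.1)) :=
    Real.contDiff_exp.of_le le_top |>.comp (contDiff_const.mul h1)
  exact ((contDiff_const.mul ((contDiff_const.mul (contDiff_const.sub hexp)).sub hsum)).mul
    contDiff_const).add ((h2 i).mul (h2 j))

lemma ghssF_contDiff {n : ℕ} (ω W : Matrix (Fin n) (Fin n) ℝ) (k₀ : ℝ) (v : Fin n → ℝ) :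
    ContDiff ℝ 1 (ghssF ω W k₀ v) := by
  have h2 : ∀ k : Fin n, ContDiff ℝ 1 (fun u : ℝ × (Fin n → ℝ) => u.2 k) :=
    fun k => (contDiff_apply ℝ ℝ k).comp contDiff_snd
  apply ContDiff.prodMk
  · exact ContDiff.sum fun j _ => contDiff_const.mul (h2 j)
  · apply contDiff_pi.2
    intro j
    exact ContDiff.sum fun i _ => contDiff_const.mul (ghssRHS_contDiff ω W k₀ i j)

noncomputable def ghssJet {n : ℕ} (f : (Fin n → ℝ) → ℝ) (x : Fin n → ℝ) : ℝ × (Fin n → ℝ) :=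
  (f x, fun j => fderiv ℝ f x (Pi.single j 1))

lemma clm_apply_eq_sum {n : ℕ} (L : (Fin n → ℝ) →L[ℝ] ℝ) (v : Fin n → ℝ) :
    L v = ∑ j, v j * L (Pi.single j 1) := by
  conv_lhs => rw [← Finset.univ_sum_single v]
  rw [map_sum]
  refine Finset.sum_congr rfl fun j _ => ?_
  have : (Pi.single j (v j) : Fin n → ℝ) = v j • (Pi.single j 1 : Fin n → ℝ) := by
    ext k; by_cases hk : k = j <;> simp [Pi.single_apply, hk]
  rw [this, map_smul, smul_eq_mul]

lemma jet_hasDerivAt {n : ℕ} (ω W : Matrix (Fin n) (Fin n) ℝ) (k₀ : ℝ)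
    {U : Set (Fin n → ℝ)} (hUo : IsOpen U) {f : (Fin n → ℝ) → ℝ}
    (hf : ContDiffOn ℝ 2 f U)
    (heq : ∀ x ∈ U, ∀ i j : Fin n,
      fderiv ℝ (fun y => fderiv ℝ f y (Pi.single j 1)) x (Pi.single i 1) =
      ghssRHS ω W k₀ (ghssJet f x) i j)
    (p v : Fin n → ℝ) (t : ℝ) (hx : p + t • v ∈ U) :
    HasDerivAt (fun s => ghssJet f (p + s • v)) (ghssF ω W k₀ v (ghssJet f (p + t • v))) t := by
  set x := p + t • v with hxdef
  have hγ : HasDerivAt (fun s : ℝ => p + s • v) v t := by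
    simpa using ((hasDerivAt_id t).smul_const v).const_add p
  have hfd : DifferentiableAt ℝ f x :=
    (hf.differentiableOn (by norm_num)).differentiableAt (hUo.mem_nhds hx)
  have hG : ContDiffOn ℝ 1 (fderiv ℝ f) U := hf.fderiv_of_isOpen hUo (by norm_num)
  have hgj : ∀ j : Fin n, DifferentiableAt ℝ (fun y => fderiv ℝ f y (Pi.single j 1)) x := by
    intro j
    have : DifferentiableOn ℝ (fun y => fderiv ℝ f y (Pi.single j 1)) U := by
      exact fun y hy => ((ContinuousLinearMap.apply ℝ ℝ
        (Pi.single j 1 : Fin n → ℝ)).differentiable.differentiableAt.comp_differentiableWithinAt y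
        ((hG.differentiableOn (by norm_num)) y hy))
    exact this.differentiableAt (hUo.mem_nhds hx)
  unfold ghssJet ghssF
  apply HasDerivAt.prodMk
  · -- first component
    have h := hfd.hasFDerivAt.comp_hasDerivAt t hγ
    have hval : fderiv ℝ f x v = ∑ j, v j * fderiv ℝ f x (Pi.single j 1) :=
      clm_apply_eq_sum (fderiv ℝ f x) v
    simpa [hval, Function.comp_def] using h
  · -- second component
    rw [hasDerivAt_pi]
    intro j
    have h := ((hgj j).hasFDerivAt).comp_hasDerivAt t hγ
    have hval : fderiv ℝ (fun y => fderiv ℝ f y (Pi.single j 1)) x v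
        = ∑ i, v i * ghssRHS ω W k₀ (ghssJet f x) i j := by
      rw [clm_apply_eq_sum (fderiv ℝ (fun y => fderiv ℝ f y (Pi.single j 1)) x) v]
      exact Finset.sum_congr rfl fun i _ => by rw [heq x hx i j]
    simpa [hval, Function.comp_def, ghssJet] using h

lemma jet_continuousOn {n : ℕ} {U : Set (Fin n → ℝ)} (hUo : IsOpen U)
    {f : (Fin n → ℝ) → ℝ} (hf : ContDiffOn ℝ 2 f U) :
    ContinuousOn (ghssJet f) U := by
  apply ContinuousOn.prodMk (hf.continuousOn)
  apply continuousOn_pi.2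
  intro j
  exact (ContinuousLinearMap.apply ℝ ℝ (Pi.single j 1 : Fin n → ℝ)).continuous.comp_continuousOn
    (hf.continuousOn_fderiv_of_isOpen hUo (by norm_num))

lemma ghss_local {n : ℕ} (ω W : Matrix (Fin n) (Fin n) ℝ) (k₀ : ℝ)
    {U : Set (Fin n → ℝ)} (hUo : IsOpen U)
    {α β : (Fin n → ℝ) → ℝ} (hα : ContDiffOn ℝ 2 α U) (hβ : ContDiffOn ℝ 2 β U)
    (hαeq : ∀ x ∈ U, ∀ i j : Fin n,
      fderiv ℝ (fun y => fderiv ℝ α y (Pi.single j 1)) x (Pi.single i 1) =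
      ghssRHS ω W k₀ (ghssJet α x) i j)
    (hβeq : ∀ x ∈ U, ∀ i j : Fin n,
      fderiv ℝ (fun y => fderiv ℝ β y (Pi.single j 1)) x (Pi.single i 1) =
      ghssRHS ω W k₀ (ghssJet β x) i j)
    {p : Fin n → ℝ} {ε : ℝ} (hball : Metric.ball p ε ⊆ U)
    (hjet : ghssJet α p = ghssJet β p) :
    ∀ x ∈ Metric.ball p ε, ghssJet α x = ghssJet β x := by
  intro x hx
  set v := x - p with hv
  have hmem : ∀ t ∈ Set.Icc (0:ℝ) 1, p + t • v ∈ U := by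
    intro t ht
    apply hball
    rw [Metric.mem_ball, dist_eq_norm]
    have h1 : p + t • v - p = t • v := by abel
    rw [h1, norm_smul]
    calc ‖t‖ * ‖v‖ ≤ 1 * ‖v‖ := by
          apply mul_le_mul_of_nonneg_right _ (norm_nonneg _)
          rw [Real.norm_eq_abs, abs_le]; exact ⟨by linarith [ht.1], ht.2⟩
      _ = ‖x - p‖ := by rw [one_mul]
      _ < ε := by rw [← dist_eq_norm]; exact Metric.mem_ball.1 hx
  set Fα := fun t : ℝ => ghssJet α (p + t • v) with hFα
  set Fβ := fun t : ℝ => ghssJet β (p + t • v) with hFβ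
  have hderα : ∀ t ∈ Set.Icc (0:ℝ) 1, HasDerivAt Fα (ghssF ω W k₀ v (Fα t)) t :=
    fun t ht => jet_hasDerivAt ω W k₀ hUo hα hαeq p v t (hmem t ht)
  have hderβ : ∀ t ∈ Set.Icc (0:ℝ) 1, HasDerivAt Fβ (ghssF ω W k₀ v (Fβ t)) t :=
    fun t ht => jet_hasDerivAt ω W k₀ hUo hβ hβeq p v t (hmem t ht)
  have hcontα : ContinuousOn Fα (Set.Icc 0 1) :=
    fun t ht => (hderα t ht).continuousAt.continuousWithinAt
  have hcontβ : ContinuousOn Fβ (Set.Icc 0 1) :=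
    fun t ht => (hderβ t ht).continuousAt.continuousWithinAt
  have hKcpt : IsCompact (Fα '' Set.Icc 0 1 ∪ Fβ '' Set.Icc 0 1) :=
    (isCompact_Icc.image_of_continuousOn hcontα).union
      (isCompact_Icc.image_of_continuousOn hcontβ)
  obtain ⟨R, hR⟩ := hKcpt.isBounded.subset_closedBall (0 : ℝ × (Fin n → ℝ))
  obtain ⟨C, hC⟩ := (isCompact_closedBall (0 : ℝ × (Fin n → ℝ)) R).exists_bound_of_continuousOn
    (((ghssF_contDiff ω W k₀ v).continuous_fderiv (by norm_num)).norm.continuousOn)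
  have hlip : LipschitzOnWith C.toNNReal (ghssF ω W k₀ v)
      (Metric.closedBall (0 : ℝ × (Fin n → ℝ)) R) := by
    apply (convex_closedBall _ _).lipschitzOnWith_of_nnnorm_fderiv_le
      (fun y _ => ((ghssF_contDiff ω W k₀ v).differentiable (by norm_num)).differentiableAt)
    intro y hy
    rw [← NNReal.coe_le_coe, coe_nnnorm, Real.coe_toNNReal']
    exact le_max_of_le_left (by simpa using hC y hy)
  have hEq : Set.EqOn Fα Fβ (Set.Icc 0 1) := by
    apply ODE_solution_unique_of_mem_Icc_right
      (v := fun _ => ghssF ω W k₀ v) (s := fun _ => Metric.closedBall 0 R)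
      (K := C.toNNReal) (fun _ _ => hlip) hcontα
      (fun t ht => (hderα t (Set.Ico_subset_Icc_self ht)).hasDerivWithinAt)
      (fun t ht => hR (Set.mem_union_left _ ⟨t, Set.Ico_subset_Icc_self ht, rfl⟩))
      hcontβ
      (fun t ht => (hderβ t (Set.Ico_subset_Icc_self ht)).hasDerivWithinAt)
      (fun t ht => hR (Set.mem_union_right _ ⟨t, Set.Ico_subset_Icc_self ht, rfl⟩))
      (by simp [hFα, hFβ, hjet])
  have h1 := hEq (Set.right_mem_Icc.2 zero_le_one)
  simpa [hFα, hFβ, hv] using h1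

/-- Solutions of the flat GHSS system on a connected open set are uniquely determined
by their first-order jet at a single point. -/
theorem ghss_uniqueness
    (n : ℕ) (hn : 1 ≤ n)
    (ω W : Matrix (Fin n) (Fin n) ℝ) (hω : ω.IsSymm) (hW : W.IsSymm)
    (hωW : ω * W = 1) (k₀ : ℝ)
    (U : Set (Fin n → ℝ)) (hUo : IsOpen U) (hUc : IsConnected U)
    (x₀ : Fin n → ℝ) (hx₀ : x₀ ∈ U)
    (α β : (Fin n → ℝ) → ℝ)
    (hα : ContDiffOn ℝ 2 α U) (hβ : ContDiffOn ℝ 2 β U)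
    (hαeq : ∀ x ∈ U, ∀ i j : Fin n,
      fderiv ℝ (fun y => fderiv ℝ α y (Pi.single j 1)) x (Pi.single i 1) =
      (1/2) * (k₀ * (1 - Real.exp (2 * α x)) -
        ∑ k, ∑ h, W k h * fderiv ℝ α x (Pi.single k 1) * fderiv ℝ α x (Pi.single h 1)) *
        ω i j
      + fderiv ℝ α x (Pi.single i 1) * fderiv ℝ α x (Pi.single j 1))
    (hβeq : ∀ x ∈ U, ∀ i j : Fin n,
      fderiv ℝ (fun y => fderiv ℝ β y (Pi.single j 1)) x (Pi.single i 1) =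
      (1/2) * (k₀ * (1 - Real.exp (2 * β x)) -
        ∑ k, ∑ h, W k h * fderiv ℝ β x (Pi.single k 1) * fderiv ℝ β x (Pi.single h 1)) *
        ω i j
      + fderiv ℝ β x (Pi.single i 1) * fderiv ℝ β x (Pi.single j 1))
    (h0 : α x₀ = β x₀)
    (h1 : ∀ i : Fin n, fderiv ℝ α x₀ (Pi.single i 1) = fderiv ℝ β x₀ (Pi.single i 1)) :
    Set.EqOn α β U := by
  have hαeq' : ∀ x ∈ U, ∀ i j : Fin n,
      fderiv ℝ (fun y => fderiv ℝ α y (Pi.single j 1)) x (Pi.single i 1) =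
      ghssRHS ω W k₀ (ghssJet α x) i j := by
    intro x hx i j; rw [hαeq x hx i j]; rfl
  have hβeq' : ∀ x ∈ U, ∀ i j : Fin n,
      fderiv ℝ (fun y => fderiv ℝ β y (Pi.single j 1)) x (Pi.single i 1) =
      ghssRHS ω W k₀ (ghssJet β x) i j := by
    intro x hx i j; rw [hβeq x hx i j]; rfl
  set S : Set (Fin n → ℝ) := {x | x ∈ U ∧ ghssJet α x = ghssJet β x} with hS
  have hSopen : IsOpen S := by
    rw [Metric.isOpen_iff]
    intro p hp
    obtain ⟨ε, hε, hball⟩ := Metric.isOpen_iff.1 hUo p hp.1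
    refine ⟨ε, hε, fun x hx => ⟨hball hx, ?_⟩⟩
    exact ghss_local ω W k₀ hUo hα hβ hαeq' hβeq' hball hp.2 x hx
  set V : Set (Fin n → ℝ) :=
    U ∩ (fun x => (ghssJet α x, ghssJet β x)) ⁻¹' (Set.diagonal (ℝ × (Fin n → ℝ)))ᶜ with hV
  have hVopen : IsOpen V := by
    apply ContinuousOn.isOpen_inter_preimage _ hUo (isClosed_diagonal.isOpen_compl)
    exact (jet_continuousOn hUo hα).prodMk (jet_continuousOn hUo hβ)
  have hsub : U ⊆ S ∪ V := by
    intro x hx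
    by_cases h : ghssJet α x = ghssJet β x
    · exact Or.inl ⟨hx, h⟩
    · exact Or.inr ⟨hx, h⟩
  have hSne : (U ∩ S).Nonempty :=
    ⟨x₀, hx₀, hx₀, Prod.ext h0 (funext h1)⟩
  have hUS : U ⊆ S := by
    by_contra hc
    obtain ⟨y, hyU, hyS⟩ := Set.not_subset.1 hc
    have hVne : (U ∩ V).Nonempty := by
      refine ⟨y, hyU, hyU, fun hd => hyS ⟨hyU, hd⟩⟩
    obtain ⟨z, _, hzS, hzV⟩ := hUc.isPreconnected S V hSopen hVopen hsub hSne hVne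
    exact hzV.2 hzS.2
  intro x hx
  have := (hUS hx).2
  exact congrArg Prod.fst this
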